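/- Let λ₁, λ₂ ∈ ℝ² be linearly independent, let σ ∈ ℝ² satisfy ‖σ‖ = ‖σ − λ₁‖ = ‖σ − λ₂‖, set s = ‖σ‖² and a₁₁ = ⟨λ₁,λ₁⟩, a₁₂ = ⟨λ₁,λ₂⟩, a₂₂ = ⟨λ₂,λ₂⟩, and define f(x₁₁, x₁₂, x₂₂) = x₁₁x₂₂(x₁₁ + x₂₂ − 2x₁₂) − 4s(x₁₁x₂₂ − x₁₂²), with partial derivatives f₁₁ = ∂f/∂x₁₁, f₁₂ = ∂f/∂x₁₂, f₂₂ = ∂f/∂x₂₂ evaluated at (a₁₁, a₁₂, a₂₂). Then the following are equivalent: (i) there exists a nonzero triple (α₁₁, α₁₂, α₂₂) ∈ ℝ³ with α₁₁f₁₁ + α₁₂f₁₂ + α₂₂f₂₂ = 0 such that the symmetric matrix [[α₁₁, α₁₂], [α₁₂, α₂₂]] is positive semidefinite; (ii) the triangle with vertices 0, λ₁, λ₂ has an angle of measure at least π/2, i.e. a₁₂ ≤ 0 or a₁₂ ≥ a₁₁ or a₁₂ ≥ a₂₂. -/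

import Mathlib

open scoped RealInnerProductSpace

lemma aux_psd_rank_one (v c : ℝ) : (Matrix.of ![![v^2, v*c], ![v*c, c^2]]).PosSemidef := by
  rw [Matrix.posSemidef_iff_dotProduct_mulVec]
  constructor
  · ext i j
    fin_cases i <;> fin_cases j <;>
      simp [Matrix.conjTranspose, Matrix.transpose, Matrix.of_apply]
  · intro x
    have key : dotProduct (star x) ((Matrix.of ![![v^2, v*c], ![v*c, c^2]]).mulVec x)
        = (v * x 0 + c * x 1) ^ 2 := by
      simp [dotProduct, Matrix.mulVec, Fin.sum_univ_two, Matrix.cons_val_zero,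
        Matrix.cons_val_one, Matrix.head_cons]
      ring
    rw [key]; positivity

lemma aux_psd_extract (a b c : ℝ) (h : (Matrix.of ![![a, b], ![b, c]]).PosSemidef) :
    0 ≤ a ∧ 0 ≤ c ∧ b ^ 2 ≤ a * c := by
  obtain ⟨hherm, hq⟩ := Matrix.posSemidef_iff_dotProduct_mulVec.1 h
  have h1 := hq ![1, 0]
  have h2 := hq ![0, 1]
  simp [dotProduct, Matrix.mulVec, Fin.sum_univ_two, Matrix.cons_val_zero,
    Matrix.cons_val_one, Matrix.head_cons] at h1 h2
  have hd : discrim a (2 * b) c ≤ 0 := by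
    apply discrim_le_zero
    intro t
    have h3 := hq ![t, 1]
    simp [dotProduct, Matrix.mulVec, Fin.sum_univ_two, Matrix.cons_val_zero,
      Matrix.cons_val_one, Matrix.head_cons] at h3
    nlinarith [h3]
  rw [discrim] at hd
  exact ⟨h1, h2, by nlinarith⟩

lemma aux_exist_iff (A B C : ℝ) :
    (∃ a b c : ℝ, ¬(a = 0 ∧ b = 0 ∧ c = 0) ∧ a * A + b * B + c * C = 0 ∧
        (Matrix.of ![![a, b], ![b, c]]).PosSemidef) ↔ 0 ≤ B ^ 2 - 4 * A * C := by
  constructor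
  · rintro ⟨a, b, c, hnz, hL, hpsd⟩
    obtain ⟨ha, hc, hb2⟩ := aux_psd_extract a b c hpsd
    by_contra hΔ
    push_neg at hΔ
    have key : ∀ A' B' C' : ℝ, 0 < A' → 0 < C' → B' ^ 2 < 4 * A' * C' →
        a * A' + b * B' + c * C' = 0 → False := by
      intro A' B' C' hA hC hB hL'
      have h1 : (A' * a + C' * c) ^ 2 = B' ^ 2 * b ^ 2 := by
        linear_combination (a * A' + c * C' - b * B') * hL'
      have hac0 : a * c ≤ 0 := by
        by_contra hac
        push_neg at hac
        nlinarith [h1, hb2, sq_nonneg (A' * a - C' * c), sq_nonneg B']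
      have hb0 : b = 0 := by nlinarith [sq_nonneg b]
      have hsum : A' * a + C' * c = 0 := by
        have h0 : (A' * a + C' * c) ^ 2 = 0 := by rw [h1, hb0]; ring
        exact pow_eq_zero_iff (n := 2) (by norm_num) |>.1 h0
      have ha0 : a = 0 := by nlinarith [mul_nonneg hA.le ha, mul_nonneg hC.le hc]
      have hc0 : c = 0 := by nlinarith [mul_nonneg hA.le ha, mul_nonneg hC.le hc]
      exact hnz ⟨ha0, hb0, hc0⟩
    have hAne : A ≠ 0 := by
      intro h0
      rw [h0] at hΔ
      nlinarith [sq_nonneg B]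
    have hAC : 0 < A * C := by nlinarith [sq_nonneg B]
    rcases lt_or_gt_of_ne hAne with hA | hA
    · have hC : C < 0 := by nlinarith
      exact key (-A) (-B) (-C) (by linarith) (by linarith) (by nlinarith) (by linarith)
    · have hC : 0 < C := by nlinarith
      exact key A B C hA hC (by nlinarith) hL
  · intro hΔ
    by_cases hA : A = 0
    · refine ⟨1, 0, 0, by simp, by simp [hA], ?_⟩
      have h := aux_psd_rank_one 1 0
      norm_num at h
      exact h
    · set t := Real.sqrt (B ^ 2 - 4 * A * C) with htdef
      have ht : t ^ 2 = B ^ 2 - 4 * A * C := Real.sq_sqrt hΔ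
      refine ⟨(-B + t) ^ 2, (-B + t) * (2 * A), (2 * A) ^ 2, ?_, ?_, aux_psd_rank_one (-B + t) (2 * A)⟩
      · rintro ⟨-, -, h3⟩
        exact hA (by nlinarith [h3])
      · linear_combination A * ht

lemma aux_sign_iff (a₁₁ a₁₂ a₂₂ : ℝ) (h1 : 0 < a₁₁) (h2 : 0 < a₂₂)
    (hD : 0 < a₁₁ * a₂₂ - a₁₂ ^ 2) :
    a₁₂ * (a₁₁ - a₁₂) * (a₂₂ - a₁₂) * (a₁₁ + a₂₂ - 2 * a₁₂) ≤ 0 ↔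
      (a₁₂ ≤ 0 ∨ a₁₁ ≤ a₁₂ ∨ a₂₂ ≤ a₁₂) := by
  constructor
  · intro h
    by_contra hc
    push_neg at hc
    obtain ⟨hr, hp, hq⟩ := hc
    have hT : 0 < a₁₁ + a₂₂ - 2 * a₁₂ := by linarith
    nlinarith [mul_pos (mul_pos hr (by linarith : (0:ℝ) < a₁₁ - a₁₂))
      (by linarith : (0:ℝ) < a₂₂ - a₁₂)]
  · rintro (hr | hp | hq)
    · have hp : 0 < a₁₁ - a₁₂ := by linarith
      have hq : 0 < a₂₂ - a₁₂ := by linarith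
      have hT : 0 < a₁₁ + a₂₂ - 2 * a₁₂ := by linarith
      nlinarith [mul_pos (mul_pos hp hq) hT]
    · have hr : 0 < a₁₂ := by linarith
      by_cases hq : a₂₂ ≤ a₁₂
      · nlinarith [mul_nonneg (mul_nonneg hr.le (by linarith : (0:ℝ) ≤ a₁₂ - a₁₁))
          (by linarith : (0:ℝ) ≤ a₁₂ - a₂₂)]
      · push_neg at hq
        have hpq : (a₁₁ - a₁₂) * (a₂₂ - a₁₂) ≤ 0 :=
          mul_nonpos_of_nonpos_of_nonneg (by linarith) (by linarith)
        have hrT : 0 < a₁₂ * (a₁₁ + a₂₂ - 2 * a₁₂) := by nlinarith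
        nlinarith [mul_nonpos_of_nonneg_of_nonpos hrT.le hpq]
    · have hr : 0 < a₁₂ := by linarith
      by_cases hp : a₁₁ ≤ a₁₂
      · nlinarith [mul_nonneg (mul_nonneg hr.le (by linarith : (0:ℝ) ≤ a₁₂ - a₁₁))
          (by linarith : (0:ℝ) ≤ a₁₂ - a₂₂)]
      · push_neg at hp
        have hpq : (a₁₁ - a₁₂) * (a₂₂ - a₁₂) ≤ 0 :=
          mul_nonpos_of_nonneg_of_nonpos (by linarith) (by linarith)
        have hrT : 0 < a₁₂ * (a₁₁ + a₂₂ - 2 * a₁₂) := by nlinarith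
        nlinarith [mul_nonpos_of_nonneg_of_nonpos hrT.le hpq]

lemma aux_key (a₁₁ a₁₂ a₂₂ s f₁₁ f₁₂ f₂₂ : ℝ)
    (hDne : a₁₁ * a₂₂ - a₁₂ ^ 2 ≠ 0)
    (hsval : s = a₁₁ * a₂₂ * (a₁₁ + a₂₂ - 2 * a₁₂) / (4 * (a₁₁ * a₂₂ - a₁₂ ^ 2)))
    (hd₁₁ : f₁₁ = a₂₂ * (2 * a₁₁ + a₂₂ - 2 * a₁₂) - 4 * s * a₂₂)
    (hd₁₂ : f₁₂ = -2 * a₁₁ * a₂₂ + 8 * s * a₁₂)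
    (hd₂₂ : f₂₂ = a₁₁ * (a₁₁ + 2 * a₂₂ - 2 * a₁₂) - 4 * s * a₁₁) :
    (a₁₁ * a₂₂ - a₁₂ ^ 2) * (f₁₂ ^ 2 - 4 * f₁₁ * f₂₂) =
      -8 * a₁₁ * a₂₂ * (a₁₂ * (a₁₁ - a₁₂) * (a₂₂ - a₁₂) * (a₁₁ + a₂₂ - 2 * a₁₂)) := by
  rw [hd₁₁, hd₁₂, hd₂₂, hsval]
  field_simp
  ring

lemma aux_final (a₁₁ a₁₂ a₂₂ f₁₁ f₁₂ f₂₂ : ℝ) (h1 : 0 < a₁₁) (h2 : 0 < a₂₂)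
    (hD : 0 < a₁₁ * a₂₂ - a₁₂ ^ 2)
    (hkey : (a₁₁ * a₂₂ - a₁₂ ^ 2) * (f₁₂ ^ 2 - 4 * f₁₁ * f₂₂) =
      -8 * a₁₁ * a₂₂ * (a₁₂ * (a₁₁ - a₁₂) * (a₂₂ - a₁₂) * (a₁₁ + a₂₂ - 2 * a₁₂))) :
    0 ≤ f₁₂ ^ 2 - 4 * f₁₁ * f₂₂ ↔ (a₁₂ ≤ 0 ∨ a₁₁ ≤ a₁₂ ∨ a₂₂ ≤ a₁₂) := by
  rw [← aux_sign_iff a₁₁ a₁₂ a₂₂ h1 h2 hD]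
  set P := a₁₂ * (a₁₁ - a₁₂) * (a₂₂ - a₁₂) * (a₁₁ + a₂₂ - 2 * a₁₂) with hP
  constructor
  · intro h
    by_contra hPpos
    push_neg at hPpos
    nlinarith [mul_nonneg hD.le h, mul_pos (mul_pos h1 h2) hPpos]
  · intro hPle
    have h8 : 0 ≤ (a₁₁ * a₂₂ - a₁₂ ^ 2) * (f₁₂ ^ 2 - 4 * f₁₁ * f₂₂) := by
      rw [hkey]
      nlinarith [mul_nonneg (mul_pos h1 h2).le (neg_nonneg.2 hPle)]
    by_contra hn
    push_neg at hn
    nlinarith [mul_pos hD (by linarith : 0 < -(f₁₂ ^ 2 - 4 * f₁₁ * f₂₂))]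

/-- the paper's Proposition 1: For the hexagonal honeycomb framework with
circumcenter `σ` of the triangle `0, λ₁, λ₂` and `s = ‖σ‖²`, there is a nonzero vector
`(α₁₁, α₁₂, α₂₂)` in the tangent plane `α₁₁f₁₁ + α₁₂f₁₂ + α₂₂f₂₂ = 0` of the deformation
space `f = 0` whose associated symmetric 2×2 matrix is positive semidefinite iff the
triangle with vertices `0, λ₁, λ₂` has an angle of measure at least `π/2`. -/
theorem stmt_12 (lam₁ lam₂ σ : EuclideanSpace ℝ (Fin 2))
    (hli : LinearIndependent ℝ ![lam₁, lam₂])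
    (h₁ : ‖σ‖ = ‖σ - lam₁‖) (h₂ : ‖σ‖ = ‖σ - lam₂‖)
    (s a₁₁ a₁₂ a₂₂ : ℝ)
    (hs : s = ‖σ‖ ^ 2)
    (ha₁₁ : a₁₁ = ⟪lam₁, lam₁⟫) (ha₁₂ : a₁₂ = ⟪lam₁, lam₂⟫) (ha₂₂ : a₂₂ = ⟪lam₂, lam₂⟫)
    (f : ℝ → ℝ → ℝ → ℝ)
    (hf : f = fun x₁₁ x₁₂ x₂₂ =>
      x₁₁ * x₂₂ * (x₁₁ + x₂₂ - 2 * x₁₂) - 4 * s * (x₁₁ * x₂₂ - x₁₂ ^ 2))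
    (f₁₁ f₁₂ f₂₂ : ℝ)
    (hf₁₁ : f₁₁ = deriv (fun t => f t a₁₂ a₂₂) a₁₁)
    (hf₁₂ : f₁₂ = deriv (fun t => f a₁₁ t a₂₂) a₁₂)
    (hf₂₂ : f₂₂ = deriv (fun t => f a₁₁ a₁₂ t) a₂₂) :
    (∃ α₁₁ α₁₂ α₂₂ : ℝ, ¬(α₁₁ = 0 ∧ α₁₂ = 0 ∧ α₂₂ = 0) ∧
        α₁₁ * f₁₁ + α₁₂ * f₁₂ + α₂₂ * f₂₂ = 0 ∧
        (Matrix.of ![![α₁₁, α₁₂], ![α₁₂, α₂₂]]).PosSemidef) ↔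
      (a₁₂ ≤ 0 ∨ a₁₁ ≤ a₁₂ ∨ a₂₂ ≤ a₁₂) := by
  -- ## Geometric facts
  have hne₁ : lam₁ ≠ 0 := by
    have := hli.ne_zero 0; simpa using this
  have hne₂ : lam₂ ≠ 0 := by
    have := hli.ne_zero 1; simpa using this
  have hpos₁ : 0 < a₁₁ := by
    rw [ha₁₁, real_inner_self_eq_norm_sq]
    exact pow_pos (norm_pos_iff.2 hne₁) 2
  have hpos₂ : 0 < a₂₂ := by
    rw [ha₂₂, real_inner_self_eq_norm_sq]
    exact pow_pos (norm_pos_iff.2 hne₂) 2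
  have key₁ : 2 * ⟪σ, lam₁⟫ = a₁₁ := by
    have h := congrArg (fun t => t ^ 2) h₁
    simp only [← real_inner_self_eq_norm_sq] at h
    rw [inner_sub_sub_self] at h
    rw [ha₁₁]
    linarith [h, real_inner_comm σ lam₁, real_inner_comm σ lam₂]
  have key₂ : 2 * ⟪σ, lam₂⟫ = a₂₂ := by
    have h := congrArg (fun t => t ^ 2) h₂
    simp only [← real_inner_self_eq_norm_sq] at h
    rw [inner_sub_sub_self] at h
    rw [ha₂₂]
    linarith [h, real_inner_comm σ lam₁, real_inner_comm σ lam₂]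
  have e₁ : ⟪lam₁, σ⟫ = a₁₁ / 2 := by rw [real_inner_comm]; linarith
  have e₂ : ⟪lam₂, σ⟫ = a₂₂ / 2 := by rw [real_inner_comm]; linarith
  set D : ℝ := a₁₁ * a₂₂ - a₁₂ ^ 2 with hD
  have hli' := LinearIndependent.pair_iff.1 hli
  have hDpos : 0 < D := by
    set t : ℝ := a₁₂ / a₁₁ with ht
    have hv : lam₂ - t • lam₁ ≠ 0 := by
      intro hv0
      have h0 : (-t) • lam₁ + (1:ℝ) • lam₂ = 0 := by
        rw [neg_smul, one_smul]
        rw [sub_eq_zero] at hv0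
        rw [hv0]; abel
      have := (hli' (-t) 1 h0).2
      norm_num at this
    have hq : 0 < ⟪lam₂ - t • lam₁, lam₂ - t • lam₁⟫ := by
      rw [real_inner_self_eq_norm_sq]
      exact pow_pos (norm_pos_iff.2 hv) 2
    have hexp : ⟪lam₂ - t • lam₁, lam₂ - t • lam₁⟫ = a₂₂ - 2 * t * a₁₂ + t ^ 2 * a₁₁ := by
      simp only [inner_sub_left, inner_sub_right, real_inner_smul_left, real_inner_smul_right]
      rw [← ha₂₂, ← ha₁₁, real_inner_comm lam₁ lam₂, ← ha₁₂]
      ring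
    rw [hexp, ht] at hq
    have h11 : a₁₁ ≠ 0 := ne_of_gt hpos₁
    have hq2 : 0 < (a₂₂ - 2 * (a₁₂ / a₁₁) * a₁₂ + (a₁₂ / a₁₁) ^ 2 * a₁₁) * a₁₁ :=
      mul_pos hq hpos₁
    rw [hD]
    field_simp at hq2
    nlinarith [hq2]
  have hDne : D ≠ 0 := ne_of_gt hDpos
  have hspan : Submodule.span ℝ (Set.range ![lam₁, lam₂]) = ⊤ := by
    apply hli.span_eq_top_of_card_eq_finrank
    simp [finrank_euclideanSpace_fin]
  set x : ℝ := a₂₂ * (a₁₁ - a₁₂) / (2 * D) with hx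
  set y : ℝ := a₁₁ * (a₂₂ - a₁₂) / (2 * D) with hy
  set w : EuclideanSpace ℝ (Fin 2) := σ - x • lam₁ - y • lam₂ with hw
  have hw₁ : ⟪lam₁, w⟫ = 0 := by
    rw [hw, inner_sub_right, inner_sub_right, real_inner_smul_right, real_inner_smul_right,
      e₁, ← ha₁₁, ← ha₁₂, hx, hy]
    field_simp
    ring
  have hw₂ : ⟪lam₂, w⟫ = 0 := by
    rw [hw, inner_sub_right, inner_sub_right, real_inner_smul_right, real_inner_smul_right,
      e₂, real_inner_comm lam₁ lam₂, ← ha₁₂, ← ha₂₂, hx, hy]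
    field_simp
    ring
  have hw0 : w = 0 := by
    have hmem : w ∈ (Submodule.span ℝ (Set.range ![lam₁, lam₂]))ᗮ := by
      rw [Submodule.mem_orthogonal]
      intro u hu
      induction hu using Submodule.span_induction with
      | mem u hu =>
        rcases hu with ⟨i, rfl⟩
        fin_cases i
        · simpa using hw₁
        · simpa using hw₂
      | zero => simp
      | add u v _ _ hu hv => rw [inner_add_left, hu, hv]; ring
      | smul c u _ hu => rw [real_inner_smul_left, hu]; ring
    rw [hspan, Submodule.top_orthogonal_eq_bot, Submodule.mem_bot] at hmem
    exact hmem
  have hσ : σ = x • lam₁ + y • lam₂ := by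
    have h := hw0
    rw [hw, sub_sub, sub_eq_zero] at h
    exact h
  have hs' : s = x ^ 2 * a₁₁ + 2 * (x * y) * a₁₂ + y ^ 2 * a₂₂ := by
    rw [hs, ← real_inner_self_eq_norm_sq, hσ]
    simp only [inner_add_left, inner_add_right, real_inner_smul_left, real_inner_smul_right]
    rw [← ha₁₁, ← ha₂₂, real_inner_comm lam₁ lam₂, ← ha₁₂]
    ring
  have hsval : s = a₁₁ * a₂₂ * (a₁₁ + a₂₂ - 2 * a₁₂) / (4 * D) := by
    rw [hs', hx, hy]
    field_simp
    ring
  -- ## Derivatives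
  simp only [hf] at hf₁₁ hf₁₂ hf₂₂
  have hd₁₁ : f₁₁ = a₂₂ * (2 * a₁₁ + a₂₂ - 2 * a₁₂) - 4 * s * a₂₂ := by
    rw [hf₁₁]
    have h : HasDerivAt (fun t : ℝ => t * a₂₂ * (t + a₂₂ - 2 * a₁₂) - 4 * s * (t * a₂₂ - a₁₂ ^ 2))
        (a₂₂ * (2 * a₁₁ + a₂₂ - 2 * a₁₂) - 4 * s * a₂₂) a₁₁ := by
      have h1 : HasDerivAt (fun t : ℝ => t * a₂₂ * (t + a₂₂ - 2 * a₁₂))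
          (1 * a₂₂ * (a₁₁ + a₂₂ - 2 * a₁₂) + a₁₁ * a₂₂ * 1) a₁₁ :=
        ((hasDerivAt_id a₁₁).mul_const a₂₂).mul
          (((hasDerivAt_id a₁₁).add_const a₂₂).sub_const (2 * a₁₂))
      have h2 : HasDerivAt (fun t : ℝ => 4 * s * (t * a₂₂ - a₁₂ ^ 2)) (4 * s * (1 * a₂₂)) a₁₁ :=
        (((hasDerivAt_id a₁₁).mul_const a₂₂).sub_const (a₁₂ ^ 2)).const_mul (4 * s)
      have h3 := h1.sub h2
      refine h3.congr_deriv ?_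
      ring
    exact h.deriv
  have hd₁₂ : f₁₂ = -2 * a₁₁ * a₂₂ + 8 * s * a₁₂ := by
    rw [hf₁₂]
    have h : HasDerivAt (fun t : ℝ => a₁₁ * a₂₂ * (a₁₁ + a₂₂ - 2 * t) - 4 * s * (a₁₁ * a₂₂ - t ^ 2))
        (-2 * a₁₁ * a₂₂ + 8 * s * a₁₂) a₁₂ := by
      have h1 : HasDerivAt (fun t : ℝ => a₁₁ * a₂₂ * (a₁₁ + a₂₂ - 2 * t))
          (a₁₁ * a₂₂ * (0 - 2 * 1)) a₁₂ :=
        ((hasDerivAt_const a₁₂ (a₁₁ + a₂₂)).sub ((hasDerivAt_id a₁₂).const_mul 2)).const_mul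
          (a₁₁ * a₂₂)
      have h2 : HasDerivAt (fun t : ℝ => 4 * s * (a₁₁ * a₂₂ - t ^ 2))
          (4 * s * (0 - 2 * a₁₂ ^ 1)) a₁₂ :=
        ((hasDerivAt_const a₁₂ (a₁₁ * a₂₂)).sub (hasDerivAt_pow 2 a₁₂)).const_mul (4 * s)
      have h3 := h1.sub h2
      refine h3.congr_deriv ?_
      ring
    exact h.deriv
  have hd₂₂ : f₂₂ = a₁₁ * (a₁₁ + 2 * a₂₂ - 2 * a₁₂) - 4 * s * a₁₁ := by
    rw [hf₂₂]
    have h : HasDerivAt (fun t : ℝ => a₁₁ * t * (a₁₁ + t - 2 * a₁₂) - 4 * s * (a₁₁ * t - a₁₂ ^ 2))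
        (a₁₁ * (a₁₁ + 2 * a₂₂ - 2 * a₁₂) - 4 * s * a₁₁) a₂₂ := by
      have h1 : HasDerivAt (fun t : ℝ => a₁₁ * t * (a₁₁ + t - 2 * a₁₂))
          (a₁₁ * 1 * (a₁₁ + a₂₂ - 2 * a₁₂) + a₁₁ * a₂₂ * 1) a₂₂ :=
        (((hasDerivAt_id a₂₂).const_mul a₁₁).mul
          (((hasDerivAt_id a₂₂).const_add a₁₁).sub_const (2 * a₁₂)))
      have h2 : HasDerivAt (fun t : ℝ => 4 * s * (a₁₁ * t - a₁₂ ^ 2)) (4 * s * (a₁₁ * 1)) a₂₂ :=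
        (((hasDerivAt_id a₂₂).const_mul a₁₁).sub_const (a₁₂ ^ 2)).const_mul (4 * s)
      have h3 := h1.sub h2
      refine h3.congr_deriv ?_
      ring
    exact h.deriv
  -- ## Conclusion
  have hΔkey := aux_key a₁₁ a₁₂ a₂₂ s f₁₁ f₁₂ f₂₂ (hD ▸ hDne) (hD ▸ hsval) hd₁₁ hd₁₂ hd₂₂
  rw [aux_exist_iff f₁₁ f₁₂ f₂₂]
  exact aux_final a₁₁ a₁₂ a₂₂ f₁₁ f₁₂ f₂₂ hpos₁ hpos₂ (hD ▸ hDpos) hΔkey
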